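/- Let V₁, …, V_d be d×d permutation matrices such that V₁, …, V_r are linearly independent (over ℂ) and each V_h lies in the span of V₁, …, V_r. Then the number of distinct matrices among V₁, …, V_d is at most 2^{r−1}. -/
import Mathlib

open Module

/-- Entry evaluation as a linear map. -/
noncomputable def entryLM {d : ℕ} (i j : Fin d) : Matrix (Fin d) (Fin d) ℂ →ₗ[ℂ] ℂ where
  toFun M := M i j
  map_add' := by intros; rfl
  map_smul' := by intros; rfl

/-- Row-sum (of row `i`) as a linear map. -/
noncomputable def rowSumLM {d : ℕ} (i : Fin d) : Matrix (Fin d) (Fin d) ℂ →ₗ[ℂ] ℂ where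
  toFun M := ∑ j, M i j
  map_add' := by intros; simp [Finset.sum_add_distrib]
  map_smul' := by intros; simp [Finset.mul_sum]

/-- Key counting lemma: a finite set of 0/1 matrices whose pairwise differences lie
in a subspace of finrank at most `n` has at most `2^n` elements. -/
lemma key {d : ℕ} : ∀ (n : ℕ) (W : Submodule ℂ (Matrix (Fin d) (Fin d) ℂ)),
    Module.finrank ℂ W ≤ n → ∀ (S : Set (Matrix (Fin d) (Fin d) ℂ)), S.Finite →
    (∀ M ∈ S, ∀ i j, M i j = 0 ∨ M i j = 1) →
    (∀ M ∈ S, ∀ N ∈ S, M - N ∈ W) → S.ncard ≤ 2 ^ n := by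
  intro n
  induction n with
  | zero =>
    intro W hW S hS h01 hdiff
    have hWbot : W = ⊥ := Submodule.finrank_eq_zero.mp (Nat.le_zero.mp hW)
    have : S.ncard ≤ 1 := by
      rw [Set.ncard_le_one hS]
      intro M hM N hN
      have := hdiff M hM N hN
      rw [hWbot, Submodule.mem_bot, sub_eq_zero] at this
      exact this
    simpa using this
  | succ n ih =>
    intro W hW S hS h01 hdiff
    by_cases hsub : ∀ M ∈ S, ∀ N ∈ S, M = N
    · calc S.ncard ≤ 1 := (Set.ncard_le_one hS).mpr hsub
        _ ≤ 2 ^ (n + 1) := Nat.one_le_two_pow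
    · push_neg at hsub
      obtain ⟨M, hM, N, hN, hMN⟩ := hsub
      have hij : ∃ i j, M i j ≠ N i j := by
        by_contra h
        push_neg at h
        exact hMN (by ext i j; exact h i j)
      obtain ⟨i, j, hij⟩ := hij
      set f := entryLM (d := d) i j with hf
      set W' : Submodule ℂ (Matrix (Fin d) (Fin d) ℂ) := W ⊓ LinearMap.ker f with hW'def
      have hlt : W' < W := by
        refine lt_of_le_of_ne inf_le_left ?_
        intro heq
        have hmem : M - N ∈ W' := heq ▸ hdiff M hM N hN
        have : f (M - N) = 0 := hmem.2
        simp only [hf, entryLM, LinearMap.coe_mk, AddHom.coe_mk, Matrix.sub_apply] at this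
        exact hij (sub_eq_zero.mp this)
      have hW' : Module.finrank ℂ W' ≤ n := by
        have := Submodule.finrank_lt_finrank_of_lt hlt
        omega
      -- split S by the value at entry (i, j)
      set S0 := {A ∈ S | A i j = 0} with hS0
      set S1 := {A ∈ S | A i j = 1} with hS1
      have hcover : S = S0 ∪ S1 := by
        ext A
        constructor
        · intro hA
          rcases h01 A hA i j with h | h
          · exact Or.inl ⟨hA, h⟩
          · exact Or.inr ⟨hA, h⟩
        · rintro (⟨hA, _⟩ | ⟨hA, _⟩) <;> exact hA
      have hdiff' : ∀ a : ℂ, ∀ A ∈ S, ∀ B ∈ S, A i j = a → B i j = a → A - B ∈ W' := by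
        intro a A hA B hB hAa hBa
        refine ⟨hdiff A hA B hB, LinearMap.mem_ker.mpr ?_⟩
        show (A - B) i j = 0
        simp [Matrix.sub_apply, hAa, hBa]
      have h0 : S0.ncard ≤ 2 ^ n := by
        refine ih W' hW' S0 (hS.subset fun A hA => hA.1) (fun A hA => h01 A hA.1) ?_
        intro A hA B hB
        exact hdiff' 0 A hA.1 B hB.1 hA.2 hB.2
      have h1 : S1.ncard ≤ 2 ^ n := by
        refine ih W' hW' S1 (hS.subset fun A hA => hA.1) (fun A hA => h01 A hA.1) ?_
        intro A hA B hB
        exact hdiff' 1 A hA.1 B hB.1 hA.2 hB.2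
      calc S.ncard ≤ S0.ncard + S1.ncard := by
            rw [hcover]
            exact Set.ncard_union_le S0 S1
        _ ≤ 2 ^ n + 2 ^ n := Nat.add_le_add h0 h1
        _ = 2 ^ (n + 1) := by ring

/-- A `d × d` permutation matrix over `ℂ`. -/
def IsPermMatrix {d : ℕ} (M : Matrix (Fin d) (Fin d) ℂ) : Prop :=
  ∃ σ : Equiv.Perm (Fin d), ∀ i j, M i j = if i = σ j then 1 else 0

theorem stmt5 {d r : ℕ} (hr : r ≤ d) (hr1 : 1 ≤ r)
    (V : Fin d → Matrix (Fin d) (Fin d) ℂ)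
    (hperm : ∀ h, IsPermMatrix (V h))
    (hli : LinearIndependent ℂ (fun i : Fin r => V (Fin.castLE hr i)))
    (hspan : ∀ h, V h ∈ Submodule.span ℂ
      (Set.range (fun i : Fin r => V (Fin.castLE hr i)))) :
    (Set.range V).ncard ≤ 2 ^ (r - 1) := by
  have hd : 0 < d := lt_of_lt_of_le hr1 hr
  set i0 : Fin r := ⟨0, hr1⟩ with hi0
  set r0 : Fin d := ⟨0, hd⟩ with hr0
  set V₀ : Matrix (Fin d) (Fin d) ℂ := V (Fin.castLE hr i0) with hV₀
  set g : Fin r → Matrix (Fin d) (Fin d) ℂ := fun i => V (Fin.castLE hr i) - V₀ with hg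
  set T : Finset (Matrix (Fin d) (Fin d) ℂ) := (Finset.univ.erase i0).image g with hT
  set W : Submodule ℂ (Matrix (Fin d) (Fin d) ℂ) := Submodule.span ℂ (T : Set _) with hWdef
  -- the row-sum functional is 1 on every permutation matrix
  have hrowsum : ∀ h, rowSumLM r0 (V h) = 1 := by
    intro h
    obtain ⟨σ, hσ⟩ := hperm h
    simp only [rowSumLM, LinearMap.coe_mk, AddHom.coe_mk]
    rw [Finset.sum_congr rfl (fun j _ => hσ r0 j)]
    have hcond : ∀ j : Fin d, (r0 = σ j) = (j = σ.symm r0) := by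
      intro j
      apply propext
      exact ⟨fun h => by rw [h]; simp, fun h => by rw [h]; simp⟩
    simp_rw [hcond]
    simp
  -- each V h - V₀ belongs to W
  have hmemW : ∀ h, V h - V₀ ∈ W := by
    intro h
    obtain ⟨c, hc⟩ := (Submodule.mem_span_range_iff_exists_fun ℂ).mp (hspan h)
    have hcsum : ∑ i, c i = 1 := by
      have := congrArg (rowSumLM r0) hc
      rw [map_sum] at this
      simp only [map_smul, smul_eq_mul, hrowsum, mul_one] at this
      exact this
    have hdecomp : V h - V₀ = ∑ i, c i • g i := by
      simp only [hg, smul_sub]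
      rw [Finset.sum_sub_distrib, hc, ← Finset.sum_smul, hcsum, one_smul]
    rw [hdecomp, ← Finset.add_sum_erase _ _ (Finset.mem_univ i0)]
    have hgi0 : g i0 = 0 := by simp [hg, hV₀]
    rw [hgi0, smul_zero, zero_add]
    refine Submodule.sum_mem _ fun i hi => Submodule.smul_mem _ _ ?_
    exact Submodule.subset_span (Finset.mem_image_of_mem g hi)
  have hWrank : Module.finrank ℂ W ≤ r - 1 := by
    calc Module.finrank ℂ W ≤ T.card := finrank_span_finset_le_card T
      _ ≤ (Finset.univ.erase i0).card := Finset.card_image_le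
      _ = r - 1 := by rw [Finset.card_erase_of_mem (Finset.mem_univ i0)]; simp
  refine key (r - 1) W hWrank (Set.range V) (Set.finite_range V) ?_ ?_
  · rintro M ⟨h, rfl⟩ i j
    obtain ⟨σ, hσ⟩ := hperm h
    rw [hσ]
    split <;> simp
  · rintro M ⟨h, rfl⟩ N ⟨h', rfl⟩
    have : V h - V h' = (V h - V₀) - (V h' - V₀) := by abel
    rw [this]
    exact Submodule.sub_mem _ (hmemW h) (hmemW h')
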